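/- Let Ω be an (n+1)×(n+1) real symmetric matrix with exactly one negative eigenvalue and with Ω_{n+1,n+1} < 0. If x ∈ ℝ^{n+1} is such that the (n+1)-st entry of Ωx equals 0, then xᵀΩx ≥ 0. -/

import Mathlib

open Matrix

/-- Let Ω be an (n+1)×(n+1) real symmetric matrix with exactly one
negative eigenvalue and with Ω_{n+1,n+1} < 0. If x ∈ ℝ^{n+1} is such that the
(n+1)-st entry of Ωx equals 0, then xᵀΩx ≥ 0. -/
theorem stmt_0 {n : ℕ} (Ω : Matrix (Fin (n + 1)) (Fin (n + 1)) ℝ)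
    (hΩ : Ω.IsHermitian)
    (hone : (Finset.univ.filter (fun i => hΩ.eigenvalues i < 0)).card = 1)
    (hcorner : Ω (Fin.last n) (Fin.last n) < 0)
    (x : Fin (n + 1) → ℝ) (hx : (Ω.mulVec x) (Fin.last n) = 0) :
    0 ≤ x ⬝ᵥ Ω.mulVec x := by
  set μ := hΩ.eigenvalues with hμdef
  obtain ⟨i₀, hi₀⟩ := Finset.card_eq_one.mp hone
  have hμ0 : μ i₀ < 0 := by
    have : i₀ ∈ Finset.univ.filter (fun j => μ j < 0) := by rw [hi₀]; simp
    simpa using this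
  have hμpos : ∀ i, i ≠ i₀ → 0 ≤ μ i := by
    intro i hi
    by_contra h
    push_neg at h
    have : i ∈ Finset.univ.filter (fun j => μ j < 0) := by simp [h]
    rw [hi₀] at this
    exact hi (by simpa using this)
  set U := (hΩ.eigenvectorUnitary : Matrix (Fin (n+1)) (Fin (n+1)) ℝ) with hU
  have h2 : (star U : Matrix (Fin (n+1)) (Fin (n+1)) ℝ) = Uᵀ := by
    ext i j; simp [star_apply]
  have key : ∀ v w : Fin (n+1) → ℝ, v ⬝ᵥ Ω *ᵥ w
      = ∑ i, μ i * ((star U *ᵥ v) i * (star U *ᵥ w) i) := by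
    intro v w
    have hdg : (diagonal (RCLike.ofReal ∘ μ) : Matrix (Fin (n+1)) (Fin (n+1)) ℝ)
        = diagonal μ := by norm_num [Function.comp]
    conv_lhs => rw [hΩ.spectral_theorem]
    rw [hdg]
    have h1 : v ⬝ᵥ (U * diagonal μ * star U) *ᵥ w
        = (Uᵀ *ᵥ v) ⬝ᵥ (diagonal μ) *ᵥ (star U *ᵥ w) := by
      rw [← mulVec_mulVec, ← mulVec_mulVec, dotProduct_mulVec, mulVec_transpose]
    rw [Unitary.conjStarAlgAut_apply, h1, h2]
    simp [dotProduct, mulVec_diagonal, mul_comm, mul_assoc, mul_left_comm]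
  set e : Fin (n+1) → ℝ := Pi.single (Fin.last n) 1 with he
  set c := star U *ᵥ x with hc
  set d := star U *ᵥ e with hd
  have he1 : e ⬝ᵥ Ω *ᵥ e = Ω (Fin.last n) (Fin.last n) := by
    rw [he, single_dotProduct, mulVec_single]
    simp
  have he2 : e ⬝ᵥ Ω *ᵥ x = (Ω *ᵥ x) (Fin.last n) := by
    rw [he, single_dotProduct, one_mul]
  have hE : ∑ i, μ i * (d i * d i) < 0 := by
    rw [← key e e, he1]; exact hcorner
  have hO : ∑ i, μ i * (d i * c i) = 0 := by
    rw [← key e x, he2]; exact hx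
  have hsplit : ∀ f : Fin (n+1) → ℝ,
      ∑ i, f i = (∑ i ∈ Finset.univ.erase i₀, f i) + f i₀ := by
    intro f
    rw [Finset.sum_erase_add _ _ (Finset.mem_univ i₀)]
  set A := ∑ i ∈ Finset.univ.erase i₀, μ i * (c i * c i) with hA
  set B := ∑ i ∈ Finset.univ.erase i₀, μ i * (d i * d i) with hB
  set T := ∑ i ∈ Finset.univ.erase i₀, μ i * (d i * c i) with hT
  have hAnn : 0 ≤ A := Finset.sum_nonneg fun i hi =>
    mul_nonneg (hμpos i (Finset.ne_of_mem_erase hi)) (mul_self_nonneg _)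
  have hBnn : 0 ≤ B := Finset.sum_nonneg fun i hi =>
    mul_nonneg (hμpos i (Finset.ne_of_mem_erase hi)) (mul_self_nonneg _)
  have hCS : T ^ 2 ≤ A * B := by
    have hmain := Finset.sum_mul_sq_le_sq_mul_sq (Finset.univ.erase i₀)
      (fun i => Real.sqrt (μ i) * d i) (fun i => Real.sqrt (μ i) * c i)
    have e1 : ∑ i ∈ Finset.univ.erase i₀,
        (Real.sqrt (μ i) * d i) * (Real.sqrt (μ i) * c i) = T := by
      apply Finset.sum_congr rfl
      intro i hi
      have hs : Real.sqrt (μ i) * Real.sqrt (μ i) = μ i :=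
        Real.mul_self_sqrt (hμpos i (Finset.ne_of_mem_erase hi))
      rw [show Real.sqrt (μ i) * d i * (Real.sqrt (μ i) * c i)
        = (Real.sqrt (μ i) * Real.sqrt (μ i)) * (d i * c i) by ring, hs]
    have e2 : ∑ i ∈ Finset.univ.erase i₀, (Real.sqrt (μ i) * d i) ^ 2 = B := by
      apply Finset.sum_congr rfl
      intro i hi
      have hs : Real.sqrt (μ i) * Real.sqrt (μ i) = μ i :=
        Real.mul_self_sqrt (hμpos i (Finset.ne_of_mem_erase hi))
      rw [show (Real.sqrt (μ i) * d i) ^ 2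
        = (Real.sqrt (μ i) * Real.sqrt (μ i)) * (d i * d i) by ring, hs]
    have e3 : ∑ i ∈ Finset.univ.erase i₀, (Real.sqrt (μ i) * c i) ^ 2 = A := by
      apply Finset.sum_congr rfl
      intro i hi
      have hs : Real.sqrt (μ i) * Real.sqrt (μ i) = μ i :=
        Real.mul_self_sqrt (hμpos i (Finset.ne_of_mem_erase hi))
      rw [show (Real.sqrt (μ i) * c i) ^ 2
        = (Real.sqrt (μ i) * Real.sqrt (μ i)) * (c i * c i) by ring, hs]
    rw [e1, e2, e3] at hmain
    linarith [hmain]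
  have hgoal : x ⬝ᵥ Ω *ᵥ x = ∑ i, μ i * (c i * c i) := key x x
  rw [hgoal]
  rw [hsplit] at hE hO ⊢
  rw [← hB] at hE
  rw [← hT] at hO
  rw [← hA]
  -- algebra: μ₀ < 0, A,B ≥ 0, B + μ₀ d₀² < 0, T + μ₀ d₀ c₀ = 0, T² ≤ AB ⊢ 0 ≤ A + μ₀ c₀²
  have hd2 : 0 < d i₀ * d i₀ := by nlinarith [mul_self_nonneg (d i₀)]
  have h5 : A * B ≤ A * (-(μ i₀) * (d i₀ * d i₀)) := by
    apply mul_le_mul_of_nonneg_left _ hAnn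
    nlinarith
  have h4 : (μ i₀ * (d i₀ * c i₀)) ^ 2 ≤ A * B := by
    have : T = -(μ i₀ * (d i₀ * c i₀)) := by linarith
    calc (μ i₀ * (d i₀ * c i₀)) ^ 2 = T ^ 2 := by rw [this]; ring
      _ ≤ A * B := hCS
  nlinarith [h4, h5, hd2, hμ0, hAnn, mul_pos (neg_pos.mpr hμ0) hd2,
    mul_self_nonneg (c i₀)]
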